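/- arXiv:2508.11505 — 2 statements merged into one kernel-verified Lean document; each statement's English description precedes it below -/
import Mathlib

section
/- There is a universal constant c > 0 such that for every z ∈ ℂ with η := Im z > 0, every w ∈ ℂ with |w − z| ≤ η/100, and every t ≥ 0: (i) c^{−1}·Im√(w²−4) ≤ Im√(z²−4) ≤ c·Im√(w²−4); (ii) c^{−1}·Im(w_t) ≤ η_t ≤ c·Im(w_t); (iii) for every y ∈ ℂ with Im y ≤ 0, c^{−1}·|w_t − y| ≤ |z_t − y| ≤ c·|w_t − y|. Moreover, for every such z and every t ≥ 0, η_t·Im√(z_t²−4) ≥ e^{t}·η·Im√(z²−4). -/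
open MeasureTheory Real Filter Set Complex

noncomputable section

/-- `√(z²−4) := √(z−2)·√(z+2)` with principal square roots (branch cut `[−2,2]`). -/
def sqrtD (z : ℂ) : ℂ := (z - 2) ^ ((1 : ℂ) / 2) * (z + 2) ^ ((1 : ℂ) / 2)

/-- The characteristic curve `z_t`. -/
def charC (z : ℂ) (t : ℝ) : ℂ :=
  ((Real.exp (t / 2) : ℂ) * (z + sqrtD z) + (Real.exp (-t / 2) : ℂ) * (z - sqrtD z)) / 2

namespace CCPS

lemma half_sq {u : ℂ} (hu : u ≠ 0) : u ^ ((1:ℂ)/2) * u ^ ((1:ℂ)/2) = u := by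
  rw [← Complex.cpow_add _ _ hu]
  norm_num

lemma hp {u : ℂ} (hu : 0 < u.im) :
    0 < (u ^ ((1:ℂ)/2)).re ∧ 0 < (u ^ ((1:ℂ)/2)).im ∧
    u ^ ((1:ℂ)/2) * u ^ ((1:ℂ)/2) = u ∧
    2 * ((u ^ ((1:ℂ)/2)).re * (u ^ ((1:ℂ)/2)).im) = u.im := by
  have hu0 : u ≠ 0 := by
    intro h; rw [h] at hu; simp at hu
  have harg0 : 0 < Complex.arg u := by
    rcases lt_or_eq_of_le (Complex.arg_nonneg_iff.mpr hu.le) with h | h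
    · exact h
    · exfalso
      have := (Complex.arg_eq_zero_iff).mp h.symm
      linarith [this.2, hu]
  have hargpi : Complex.arg u < Real.pi := by
    rcases lt_or_eq_of_le (Complex.arg_le_pi u) with h | h
    · exact h
    · exfalso
      have := (Complex.arg_eq_pi_iff).mp h
      linarith [this.2, hu]
  have h1 : (Complex.log u * ((1:ℂ)/2)).im = Complex.arg u / 2 := by
    simp [Complex.mul_im, Complex.log_im, Complex.log_re]
    ring
  have hre : 0 < (u ^ ((1:ℂ)/2)).re := by
    rw [Complex.cpow_def_of_ne_zero hu0, Complex.exp_re, h1]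
    have : 0 < Real.cos (Complex.arg u / 2) :=
      Real.cos_pos_of_mem_Ioo ⟨by linarith [Real.pi_pos], by linarith⟩
    positivity
  have him : 0 < (u ^ ((1:ℂ)/2)).im := by
    rw [Complex.cpow_def_of_ne_zero hu0, Complex.exp_im, h1]
    have : 0 < Real.sin (Complex.arg u / 2) :=
      Real.sin_pos_of_pos_of_lt_pi (by linarith) (by linarith [Real.pi_pos])
    positivity
  have hsq := half_sq hu0
  refine ⟨hre, him, hsq, ?_⟩
  have := congrArg Complex.im hsq
  simp [Complex.mul_im] at this
  linarith

lemma abs_le_re_add_im {x : ℂ} (h1 : 0 ≤ x.re) (h2 : 0 ≤ x.im) :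
    ‖x‖ ≤ x.re + x.im := by
  calc ‖x‖ ≤ |x.re| + |x.im| := Complex.norm_le_abs_re_add_abs_im x
  _ = x.re + x.im := by rw [_root_.abs_of_nonneg h1, _root_.abs_of_nonneg h2]

lemma abs_le_abs_add {a b : ℂ} (ha1 : 0 ≤ a.re) (ha2 : 0 ≤ a.im)
    (hb1 : 0 ≤ b.re) (hb2 : 0 ≤ b.im) : ‖a‖ ≤ ‖a + b‖ := by
  rw [Complex.norm_def, Complex.norm_def]
  apply Real.sqrt_le_sqrt
  simp only [Complex.normSq_apply, Complex.add_re, Complex.add_im]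
  nlinarith

lemma sqrt_diff {u v : ℂ} (hu : 0 < u.im) (hv : 0 < v.im) :
    v ^ ((1:ℂ)/2) - u ^ ((1:ℂ)/2) = (v - u) / (v ^ ((1:ℂ)/2) + u ^ ((1:ℂ)/2)) := by
  obtain ⟨hur, hui, hus, -⟩ := hp hu
  obtain ⟨hvr, hvi, hvs, -⟩ := hp hv
  have hs : v ^ ((1:ℂ)/2) + u ^ ((1:ℂ)/2) ≠ 0 := by
    intro h
    have := congrArg Complex.re h
    simp [Complex.add_re] at this
    linarith
  rw [eq_div_iff hs]
  linear_combination hvs - hus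

lemma aux_re_bounds {ar ai br bi wim zim : ℝ} (har : 0 < ar) (hai : 0 < ai)
    (hbr : 0 < br) (hbi : 0 < bi)
    (hP : 2 * (ar * ai) = zim) (hP' : 2 * (br * bi) = wim)
    (hub : wim ≤ (101/100) * zim) (hlb : (99/100) * zim ≤ wim)
    (hilb : (49/50) * ai ≤ bi) (hiub : bi ≤ (51/50) * ai) :
    (24/25) * ar ≤ br ∧ br ≤ (26/25) * ar := by
  constructor
  · nlinarith [mul_le_mul_of_nonneg_left hiub hbr.le, mul_pos har hai]
  · nlinarith [mul_le_mul_of_nonneg_left hilb hbr.le, mul_pos har hai]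

lemma aux_im_comp {ar ai br bi cr ci dr di : ℝ}
    (har : 0 < ar) (hai : 0 < ai) (hbr : 0 < br) (hbi : 0 < bi)
    (hcr : 0 < cr) (hci : 0 < ci) (hdr : 0 < dr) (hdi : 0 < di)
    (h1 : (24/25) * ar ≤ cr) (h2 : cr ≤ (26/25) * ar)
    (h3 : (49/50) * ai ≤ ci) (h4 : ci ≤ (51/50) * ai)
    (h5 : (24/25) * br ≤ dr) (h6 : dr ≤ (26/25) * br)
    (h7 : (49/50) * bi ≤ di) (h8 : di ≤ (51/50) * bi) :
    cr * di + ci * dr ≤ (11/10) * (ar * bi + ai * br) ∧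
    (9/10) * (ar * bi + ai * br) ≤ cr * di + ci * dr := by
  constructor
  · nlinarith [mul_le_mul h2 h8 hdi.le (by linarith), mul_le_mul h4 h6 hdr.le (by linarith)]
  · nlinarith [mul_le_mul h1 h7 (by positivity) hcr.le, mul_le_mul h3 h5 (by positivity) hci.le]

lemma aux_T2 {ar ai br bi m : ℝ} (har : 0 < ar) (hai : 0 < ai)
    (hbr : 0 < br) (hbi : 0 < bi) (hm : 0 < m) (h1 : ar ≤ m) (h2 : ai ≤ m) :
    2 * (ar * ai) / 100 / m * (br + bi) ≤ (1/50) * (ar * bi + ai * br) := by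
  rw [div_div, div_mul_eq_mul_div, div_le_iff₀ (by positivity)]
  nlinarith [mul_le_mul_of_nonneg_right h1 (mul_pos hai hbr).le,
    mul_le_mul_of_nonneg_right h2 (mul_pos har hbi).le]

lemma aux_T1 {cr ci dr di m zim : ℝ} (hcr : 0 < cr) (hci : 0 < ci)
    (hdr : 0 < dr) (hdi : 0 < di) (hm : 0 < m) (h1 : dr ≤ m) (h2 : di ≤ m)
    (hz : zim ≤ (200/99) * (dr * di)) (hz0 : 0 < zim) :
    (cr + ci) * (zim / 100 / m) ≤ (2/99) * (cr * di + ci * dr) := by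
  rw [div_div, mul_div_assoc', div_le_iff₀ (by positivity)]
  nlinarith [mul_le_mul_of_nonneg_left hz (by positivity : (0:ℝ) ≤ cr + ci),
    mul_le_mul_of_nonneg_right h1 (mul_pos hcr hdi).le,
    mul_le_mul_of_nonneg_right h2 (mul_pos hci hdr).le]

set_option maxHeartbeats 1000000 in
lemma key {z w : ℂ} (hz : 0 < z.im) (hd : ‖w - z‖ ≤ z.im / 100) :
    0 < (sqrtD z).im ∧ 0 < (sqrtD w).im ∧
    (sqrtD w).im ≤ (11/10) * (sqrtD z).im ∧
    (9/10) * (sqrtD z).im ≤ (sqrtD w).im ∧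
    ‖sqrtD w - sqrtD z‖ ≤ (1/20) * (sqrtD z).im ∧
    (99/100) * z.im ≤ w.im ∧ w.im ≤ (101/100) * z.im := by
  have himwz : |w.im - z.im| ≤ z.im / 100 := by
    have h := le_trans (Complex.abs_im_le_norm (w - z)) hd
    simpa [Complex.sub_im] using h
  obtain ⟨him1, him2⟩ := abs_le.mp himwz
  have hwlb : (99/100) * z.im ≤ w.im := by linarith
  have hwub : w.im ≤ (101/100) * z.im := by linarith
  have hwim : 0 < w.im := by linarith
  have hzm : (0:ℝ) < (z - 2).im := by simpa [Complex.sub_im] using hz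
  have hzp : (0:ℝ) < (z + 2).im := by simpa [Complex.add_im] using hz
  have hwm : (0:ℝ) < (w - 2).im := by simpa [Complex.sub_im] using hwim
  have hwp : (0:ℝ) < (w + 2).im := by simpa [Complex.add_im] using hwim
  set A := (z - 2) ^ ((1:ℂ)/2) with hA
  set B := (z + 2) ^ ((1:ℂ)/2) with hB
  set A' := (w - 2) ^ ((1:ℂ)/2) with hA'
  set B' := (w + 2) ^ ((1:ℂ)/2) with hB'
  obtain ⟨hAr, hAi, hAs, hAp⟩ := hp hzm
  obtain ⟨hBr, hBi, hBs, hBp⟩ := hp hzp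
  obtain ⟨hA'r, hA'i, hA's, hA'p⟩ := hp hwm
  obtain ⟨hB'r, hB'i, hB's, hB'p⟩ := hp hwp
  rw [← hA] at hAr hAi hAp
  rw [← hB] at hBr hBi hBp
  rw [← hA'] at hA'r hA'i hA'p
  rw [← hB'] at hB'r hB'i hB'p
  clear hAs hBs hA's hB's
  rw [Complex.sub_im] at hAp hA'p
  rw [Complex.add_im] at hBp hB'p
  simp only [Complex.im_ofNat, sub_zero, add_zero] at hAp hBp hA'p hB'p
  -- expressions for sqrtD
  have hsz : (sqrtD z).im = A.re * B.im + A.im * B.re := by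
    rw [sqrtD, ← hA, ← hB, Complex.mul_im]
  have hsw : (sqrtD w).im = A'.re * B'.im + A'.im * B'.re := by
    rw [sqrtD, ← hA', ← hB', Complex.mul_im]
  have h0z : 0 < (sqrtD z).im := by rw [hsz]; positivity
  have h0w : 0 < (sqrtD w).im := by rw [hsw]; positivity
  -- differences of roots
  have hdm : A' - A = (w - z) / (A' + A) := by
    have h := sqrt_diff hzm hwm
    rw [← hA, ← hA'] at h
    simpa using h
  have hdp : B' - B = (w - z) / (B' + B) := by
    have h := sqrt_diff hzp hwp
    rw [← hB, ← hB'] at h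
    simpa using h
  have hAne : A ≠ 0 := by intro h; rw [h] at hAr; simp at hAr
  have hB'ne : B' ≠ 0 := by intro h; rw [h] at hB'r; simp at hB'r
  have hAabs : 0 < ‖A‖ := norm_pos_iff.mpr hAne
  have hB'abs : 0 < ‖B'‖ := norm_pos_iff.mpr hB'ne
  have hAreabs : A.re ≤ ‖A‖ := Complex.re_le_norm A
  have hAimabs : A.im ≤ ‖A‖ := Complex.im_le_norm A
  have hB'reabs : B'.re ≤ ‖B'‖ := Complex.re_le_norm B'
  have hB'imabs : B'.im ≤ ‖B'‖ := Complex.im_le_norm B'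
  have habswz : (0:ℝ) ≤ ‖w - z‖ := norm_nonneg _
  -- lower bounds on sums
  have hsumA_re : A.re ≤ ‖A' + A‖ := by
    refine le_trans ?_ (Complex.re_le_norm _)
    rw [Complex.add_re]; linarith
  have hsumA_im : A.im ≤ ‖A' + A‖ := by
    refine le_trans ?_ (Complex.im_le_norm _)
    rw [Complex.add_im]; linarith
  have hsumB_re : B.re ≤ ‖B' + B‖ := by
    refine le_trans ?_ (Complex.re_le_norm _)
    rw [Complex.add_re]; linarith
  have hsumA_abs : ‖A‖ ≤ ‖A' + A‖ := by
    rw [add_comm]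
    exact abs_le_abs_add hAr.le hAi.le hA'r.le hA'i.le
  have hsumB_abs : ‖B'‖ ≤ ‖B' + B‖ := by
    exact abs_le_abs_add hB'r.le hB'i.le hBr.le hBi.le
  -- division bounds
  have hdiv : ∀ (S : ℂ) (D : ℝ), 0 < D → D ≤ ‖S‖ →
      ‖(w - z) / S‖ ≤ z.im / 100 / D := by
    intro S D hD hDS
    rw [norm_div]
    exact div_le_div₀ (by positivity) hd hD hDS
  have hb1 : ‖A' - A‖ ≤ A.im / 50 := by
    rw [hdm]
    refine le_trans (hdiv _ _ hAr hsumA_re) (le_of_eq ?_)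
    rw [← hAp]
    field_simp
    ring
  have hc1 : ‖B' - B‖ ≤ B.im / 50 := by
    rw [hdp]
    refine le_trans (hdiv _ _ hBr hsumB_re) (le_of_eq ?_)
    rw [← hBp]
    field_simp
    ring
  have hb3 : ‖A' - A‖ ≤ z.im / 100 / ‖A‖ := by
    rw [hdm]; exact hdiv _ _ hAabs hsumA_abs
  have hc3 : ‖B' - B‖ ≤ z.im / 100 / ‖B'‖ := by
    rw [hdp]; exact hdiv _ _ hB'abs hsumB_abs
  -- im comparisons for A', B'
  have hAim' : |A'.im - A.im| ≤ A.im / 50 := by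
    have h := le_trans (Complex.abs_im_le_norm (A' - A)) hb1
    simpa [Complex.sub_im] using h
  obtain ⟨hAim1, hAim2⟩ := abs_le.mp hAim'
  have hA'i_lb : (49/50) * A.im ≤ A'.im := by linarith
  have hA'i_ub : A'.im ≤ (51/50) * A.im := by linarith
  have hBim' : |B'.im - B.im| ≤ B.im / 50 := by
    have h := le_trans (Complex.abs_im_le_norm (B' - B)) hc1
    simpa [Complex.sub_im] using h
  obtain ⟨hBim1, hBim2⟩ := abs_le.mp hBim'
  have hB'i_lb : (49/50) * B.im ≤ B'.im := by linarith
  have hB'i_ub : B'.im ≤ (51/50) * B.im := by linarith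
  -- re comparisons
  obtain ⟨hA're_lb, hA're_ub⟩ :=
    aux_re_bounds hAr hAi hA'r hA'i hAp hA'p hwub hwlb hA'i_lb hA'i_ub
  obtain ⟨hB're_lb, hB're_ub⟩ :=
    aux_re_bounds hBr hBi hB'r hB'i hBp hB'p hwub hwlb hB'i_lb hB'i_ub
  -- im sqrtD comparison
  obtain ⟨hub, hlb⟩ := aux_im_comp hAr hAi hBr hBi hA'r hA'i hB'r hB'i
    hA're_lb hA're_ub hA'i_lb hA'i_ub hB're_lb hB're_ub hB'i_lb hB'i_ub
  rw [← hsz, ← hsw] at hub hlb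
  -- difference bound
  have hsplit : sqrtD w - sqrtD z = A' * (B' - B) + (A' - A) * B := by
    have h1 : sqrtD w = A' * B' := by rw [sqrtD, ← hA', ← hB']
    have h2 : sqrtD z = A * B := by rw [sqrtD, ← hA, ← hB]
    rw [h1, h2]; ring
  have habsB : ‖B‖ ≤ B.re + B.im := abs_le_re_add_im hBr.le hBi.le
  have habsA' : ‖A'‖ ≤ A'.re + A'.im := abs_le_re_add_im hA'r.le hA'i.le
  have hT2 : ‖(A' - A) * B‖ ≤ (1/50) * (sqrtD z).im := by
    rw [norm_mul, hsz]
    have h1 : ‖A' - A‖ * ‖B‖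
        ≤ (z.im / 100 / ‖A‖) * (B.re + B.im) :=
      mul_le_mul hb3 habsB (norm_nonneg _) (by positivity)
    refine h1.trans ?_
    rw [← hAp]
    exact aux_T2 hAr hAi hBr hBi hAabs hAreabs hAimabs
  have hT1 : ‖A' * (B' - B)‖ ≤ (1/40) * (sqrtD z).im := by
    rw [norm_mul]
    have h1 : ‖A'‖ * ‖B' - B‖
        ≤ (A'.re + A'.im) * (z.im / 100 / ‖B'‖) :=
      mul_le_mul habsA' hc3 (norm_nonneg _) (by positivity)
    refine h1.trans ?_
    have h2 : (A'.re + A'.im) * (z.im / 100 / ‖B'‖)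
        ≤ (2/99) * (sqrtD w).im := by
      rw [hsw]
      refine aux_T1 hA'r hA'i hB'r hB'i hB'abs hB'reabs hB'imabs ?_ hz
      linarith [hB'p, hwlb]
    refine h2.trans ?_
    linarith
  have htot : ‖sqrtD w - sqrtD z‖ ≤ (1/20) * (sqrtD z).im := by
    rw [hsplit]
    refine le_trans (norm_add_le _ _) ?_
    linarith
  exact ⟨h0z, h0w, hub, hlb, htot, hwlb, hwub⟩
lemma ne_of_im_pos {u : ℂ} (hu : 0 < u.im) : u ≠ 0 := by
  intro h; rw [h] at hu; simp at hu

lemma sqrtD_im_pos {u : ℂ} (hu : 0 < u.im) : 0 < (sqrtD u).im := by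
  have hm : (0:ℝ) < (u - 2).im := by simpa [Complex.sub_im] using hu
  have hpp : (0:ℝ) < (u + 2).im := by simpa [Complex.add_im] using hu
  obtain ⟨h1, h2, -, -⟩ := hp hm
  obtain ⟨h3, h4, -, -⟩ := hp hpp
  rw [sqrtD, Complex.mul_im]
  positivity

lemma sqrtD_sq {u : ℂ} (hu : 0 < u.im) : sqrtD u * sqrtD u = u * u - 4 := by
  have hm : (u - 2) ≠ 0 := by
    intro h
    have := congrArg Complex.im h
    simp [Complex.sub_im] at this
    linarith
  have hpp : (u + 2) ≠ 0 := by
    intro h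
    have := congrArg Complex.im h
    simp [Complex.add_im] at this
    linarith
  have h1 := half_sq hm
  have h2 := half_sq hpp
  rw [sqrtD]
  linear_combination ((u + 2) ^ ((1:ℂ)/2) * (u + 2) ^ ((1:ℂ)/2)) * h1 + (u - 2) * h2

lemma charC_eq (z : ℂ) (t : ℝ) : charC z t =
    (((Real.exp (t/2) + Real.exp (-t/2))/2 : ℝ) : ℂ) * z +
    (((Real.exp (t/2) - Real.exp (-t/2))/2 : ℝ) : ℂ) * sqrtD z := by
  rw [charC]; push_cast; ring

lemma charC_im (z : ℂ) (t : ℝ) : (charC z t).im =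
    ((Real.exp (t/2) + Real.exp (-t/2))/2) * z.im +
    ((Real.exp (t/2) - Real.exp (-t/2))/2) * (sqrtD z).im := by
  rw [charC_eq, Complex.add_im, Complex.im_ofReal_mul, Complex.im_ofReal_mul]

lemma pq_facts (t : ℝ) (ht : 0 ≤ t) :
    1 ≤ (Real.exp (t/2) + Real.exp (-t/2))/2 ∧
    0 ≤ (Real.exp (t/2) - Real.exp (-t/2))/2 ∧
    Real.exp (t/2) * Real.exp (-t/2) = 1 := by
  have hmul : Real.exp (t/2) * Real.exp (-t/2) = 1 := by
    rw [← Real.exp_add, show t/2 + -t/2 = 0 by ring, Real.exp_zero]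
  refine ⟨?_, ?_, hmul⟩
  · nlinarith [sq_nonneg (Real.exp (t/2) - Real.exp (-t/2)), Real.exp_pos (t/2),
      Real.exp_pos (-t/2), hmul]
  · have : Real.exp (-t/2) ≤ Real.exp (t/2) := Real.exp_le_exp.mpr (by linarith)
    linarith

theorem main :
    (∃ c : ℝ, 0 < c ∧ ∀ z w : ℂ, 0 < z.im → ‖w - z‖ ≤ z.im / 100 →
      ∀ t : ℝ, 0 ≤ t →
        ((c⁻¹ * (sqrtD w).im ≤ (sqrtD z).im ∧ (sqrtD z).im ≤ c * (sqrtD w).im) ∧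
        (c⁻¹ * (charC w t).im ≤ (charC z t).im ∧ (charC z t).im ≤ c * (charC w t).im) ∧
        (∀ y : ℂ, y.im ≤ 0 →
          c⁻¹ * ‖charC w t - y‖ ≤ ‖charC z t - y‖ ∧
          ‖charC z t - y‖ ≤ c * ‖charC w t - y‖))) ∧
    (∀ z : ℂ, 0 < z.im → ∀ t : ℝ, 0 ≤ t →
      Real.exp t * z.im * (sqrtD z).im ≤ (charC z t).im * (sqrtD (charC z t)).im) := by
  constructor
  · refine ⟨2, by norm_num, ?_⟩
    intro z w hz hd t ht
    obtain ⟨h0z, h0w, hub, hlb, hdiff, hwlb, hwub⟩ := key hz hd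
    obtain ⟨hp1, hq0, -⟩ := pq_facts t ht
    set p := (Real.exp (t/2) + Real.exp (-t/2))/2 with hpdef
    set q := (Real.exp (t/2) - Real.exp (-t/2))/2 with hqdef
    have hp0 : (0:ℝ) < p := by linarith
    have himz : (charC z t).im = p * z.im + q * (sqrtD z).im := charC_im z t
    have himw : (charC w t).im = p * w.im + q * (sqrtD w).im := charC_im w t
    have hztpos : 0 < (charC z t).im := by
      rw [himz]
      have := mul_pos hp0 hz
      have := mul_nonneg hq0 h0z.le
      linarith
    refine ⟨⟨by norm_num; linarith, by linarith⟩, ⟨?_, ?_⟩, ?_⟩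
    · -- 2⁻¹ * Im w_t ≤ Im z_t
      rw [himz, himw]
      have e1 : p * w.im ≤ p * ((101/100) * z.im) :=
        mul_le_mul_of_nonneg_left hwub hp0.le
      have e2 : q * (sqrtD w).im ≤ q * ((11/10) * (sqrtD z).im) :=
        mul_le_mul_of_nonneg_left hub hq0
      have e3 : 0 < p * z.im := mul_pos hp0 hz
      have e4 : 0 ≤ q * (sqrtD z).im := mul_nonneg hq0 h0z.le
      norm_num
      linarith
    · -- Im z_t ≤ 2 * Im w_t
      rw [himz, himw]
      have e1 : p * z.im ≤ p * ((100/99) * w.im) :=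
        mul_le_mul_of_nonneg_left (by linarith) hp0.le
      have e2 : q * (sqrtD z).im ≤ q * ((10/9) * (sqrtD w).im) :=
        mul_le_mul_of_nonneg_left (by linarith) hq0
      have e3 : 0 < p * w.im := mul_pos hp0 (by linarith)
      have e4 : 0 ≤ q * (sqrtD w).im := mul_nonneg hq0 h0w.le
      linarith
    · intro y hy
      have hdt : charC z t - charC w t = (p:ℂ) * (z - w) + (q:ℂ) * (sqrtD z - sqrtD w) := by
        rw [charC_eq, charC_eq]; ring
      have habs1 : ‖charC z t - charC w t‖
          ≤ p * (z.im / 100) + q * ((1/20) * (sqrtD z).im) := by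
        rw [hdt]
        refine le_trans (norm_add_le _ _) ?_
        rw [norm_mul, norm_mul, Complex.norm_of_nonneg hp0.le,
          Complex.norm_of_nonneg hq0]
        have e1 : ‖z - w‖ ≤ z.im / 100 := by
          rw [norm_sub_rev]; exact hd
        have e2 : ‖sqrtD z - sqrtD w‖ ≤ (1/20) * (sqrtD z).im := by
          rw [norm_sub_rev]; exact hdiff
        have := mul_le_mul_of_nonneg_left e1 hp0.le
        have := mul_le_mul_of_nonneg_left e2 hq0
        linarith
      have himy : (charC z t).im ≤ ‖charC z t - y‖ := by
        refine le_trans ?_ (Complex.im_le_norm _)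
        rw [Complex.sub_im]; linarith
      have hd20 : ‖charC z t - charC w t‖
          ≤ (1/20) * ‖charC z t - y‖ := by
        have e3 : 0 ≤ p * z.im := (mul_pos hp0 hz).le
        have e4 : 0 ≤ q * (sqrtD z).im := mul_nonneg hq0 h0z.le
        rw [himz] at hztpos himy
        linarith [habs1]
      have tri1 : ‖charC w t - y‖
          ≤ ‖charC w t - charC z t‖ + ‖charC z t - y‖ :=
        norm_sub_le_norm_sub_add_norm_sub _ _ _
      have tri2 : ‖charC z t - y‖
          ≤ ‖charC z t - charC w t‖ + ‖charC w t - y‖ :=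
        norm_sub_le_norm_sub_add_norm_sub _ _ _
      have hcomm : ‖charC w t - charC z t‖
          = ‖charC z t - charC w t‖ := norm_sub_rev _ _
      have hnn : 0 ≤ ‖charC w t - y‖ := norm_nonneg _
      constructor
      · norm_num; linarith
      · linarith
  · intro z hz t ht
    have h0z : 0 < (sqrtD z).im := sqrtD_im_pos hz
    obtain ⟨hp1, hq0, hmul⟩ := pq_facts t ht
    set p := (Real.exp (t/2) + Real.exp (-t/2))/2 with hpdef
    set q := (Real.exp (t/2) - Real.exp (-t/2))/2 with hqdef
    have hp0 : (0:ℝ) < p := by linarith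
    have himz : (charC z t).im = p * z.im + q * (sqrtD z).im := charC_im z t
    have hztpos : 0 < (charC z t).im := by
      rw [himz]
      have := mul_pos hp0 hz
      have := mul_nonneg hq0 h0z.le
      linarith
    have hPQ : (p:ℂ) * (p:ℂ) - (q:ℂ) * (q:ℂ) = 1 := by
      have hr : p * p - q * q = 1 := by
        rw [hpdef, hqdef]; linear_combination hmul
      have hcast : ((p:ℂ)) * (p:ℂ) - (q:ℂ) * (q:ℂ) = ((p * p - q * q : ℝ) : ℂ) := by
        push_cast; ring
      rw [hcast, hr]; norm_num
    have hs2 := sqrtD_sq hz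
    have hr2 : ((q:ℂ) * z + (p:ℂ) * sqrtD z) * ((q:ℂ) * z + (p:ℂ) * sqrtD z)
        = charC z t * charC z t - 4 := by
      rw [charC_eq]
      linear_combination ((p:ℂ) * (p:ℂ) - (q:ℂ) * (q:ℂ)) * hs2 - 4 * hPQ
    have hst2 := sqrtD_sq hztpos
    have hzero : (sqrtD (charC z t) - ((q:ℂ) * z + (p:ℂ) * sqrtD z))
        * (sqrtD (charC z t) + ((q:ℂ) * z + (p:ℂ) * sqrtD z)) = 0 := by
      linear_combination hst2 - hr2
    have hrim : ((q:ℂ) * z + (p:ℂ) * sqrtD z).im = q * z.im + p * (sqrtD z).im := by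
      rw [Complex.add_im, Complex.im_ofReal_mul, Complex.im_ofReal_mul]
    have h0t : 0 < (sqrtD (charC z t)).im := sqrtD_im_pos hztpos
    have heq : sqrtD (charC z t) = (q:ℂ) * z + (p:ℂ) * sqrtD z := by
      rcases mul_eq_zero.mp hzero with h | h
      · exact sub_eq_zero.mp h
      · exfalso
        have him := congrArg Complex.im h
        rw [Complex.add_im, hrim, Complex.zero_im] at him
        have e1 : 0 < p * (sqrtD z).im := mul_pos hp0 h0z
        have e2 : 0 ≤ q * z.im := mul_nonneg hq0 hz.le
        linarith
    rw [himz, heq, hrim]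
    have het : Real.exp t = (p + q) * (p + q) := by
      have hpq : p + q = Real.exp (t/2) := by rw [hpdef, hqdef]; ring
      rw [hpq, ← Real.exp_add]; norm_num
    rw [het]
    nlinarith [mul_nonneg (mul_nonneg hq0 hp0.le) (sq_nonneg (z.im - (sqrtD z).im)),
      mul_pos hz h0z]
end CCPS

/-- Stability of quantities along characteristic curves under small perturbations. -/
theorem characteristic_curve_perturbation_stability :
    (∃ c : ℝ, 0 < c ∧ ∀ z w : ℂ, 0 < z.im → ‖w - z‖ ≤ z.im / 100 →
      ∀ t : ℝ, 0 ≤ t →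
        -- (i)
        (c⁻¹ * (sqrtD w).im ≤ (sqrtD z).im ∧ (sqrtD z).im ≤ c * (sqrtD w).im) ∧
        -- (ii)
        (c⁻¹ * (charC w t).im ≤ (charC z t).im ∧ (charC z t).im ≤ c * (charC w t).im) ∧
        -- (iii)
        (∀ y : ℂ, y.im ≤ 0 →
          c⁻¹ * ‖charC w t - y‖ ≤ ‖charC z t - y‖ ∧
          ‖charC z t - y‖ ≤ c * ‖charC w t - y‖)) ∧
    -- monotonicity of η_t · Im √(z_t² − 4)
    (∀ z : ℂ, 0 < z.im → ∀ t : ℝ, 0 ≤ t →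
      Real.exp t * z.im * (sqrtD z).im ≤ (charC z t).im * (sqrtD (charC z t)).im) := by
  exact CCPS.main

end
end

section
/- For every z ∈ ℂ with Im z > 0 and all t, u ∈ ℝ with t + u ≥ 0: exp(∫_{−u}^{t} m_sc′(z_{t−r}) dr) = e^{−(t+u)/2}·√(z_{t+u}²−4)/√(z²−4), where m_sc′(w) = (w/√(w²−4) − 1)/2 is the derivative of m_sc. (Note that z_{t−r} lies in the upper half-plane for all r ∈ [−u, t], since t−r ∈ [0, t+u].) -/
open MeasureTheory Real Filter Set

noncomputable section

/-- The derivative of the semicircle Stieltjes transform. -/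
def mscDeriv (w : ℂ) : ℂ := (w / sqrtD w - 1) / 2

namespace ExpIntAux

lemma cpow_half_pos {v : ℂ} (hv : 0 < v.im) :
    0 < (v ^ ((1:ℂ)/2)).re ∧ 0 < (v ^ ((1:ℂ)/2)).im := by
  have hv0 : v ≠ 0 := by intro h; simp [h] at hv
  have harg0 : 0 < v.arg := by
    rcases lt_or_eq_of_le (Complex.arg_nonneg_iff.2 hv.le) with h | h
    · exact h
    · exact absurd ((Complex.arg_eq_zero_iff).1 h.symm).2 hv.ne'
  have harg1 : v.arg < Real.pi := Complex.arg_lt_pi_iff.2 (Or.inr hv.ne')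
  rw [Complex.cpow_def_of_ne_zero hv0]
  have him : (Complex.log v * (1/2)).im = v.arg / 2 := by
    simp [Complex.mul_im, Complex.log_im]; ring
  rw [Complex.exp_re, Complex.exp_im, him]
  have hcos : 0 < Real.cos (v.arg / 2) :=
    Real.cos_pos_of_mem_Ioo ⟨by linarith [Real.pi_pos], by linarith⟩
  have hsin : 0 < Real.sin (v.arg / 2) :=
    Real.sin_pos_of_pos_of_lt_pi (by linarith) (by linarith [Real.pi_pos])
  exact ⟨by positivity, by positivity⟩

lemma sq_cpow_half (v : ℂ) : (v ^ ((1:ℂ)/2))^2 = v := by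
  have := Complex.cpow_nat_inv_pow v (show (2:ℕ) ≠ 0 by norm_num)
  convert this using 3
  norm_num

lemma sqrtD_im_pos {v : ℂ} (hv : 0 < v.im) : 0 < (sqrtD v).im := by
  have h1 := cpow_half_pos (show 0 < (v - 2).im by simpa using hv)
  have h2 := cpow_half_pos (show 0 < (v + 2).im by simpa using hv)
  rw [sqrtD, Complex.mul_im]
  nlinarith [h1.1, h1.2, h2.1, h2.2]

lemma sqrtD_ne_zero {v : ℂ} (hv : 0 < v.im) : sqrtD v ≠ 0 := by
  intro h
  have := sqrtD_im_pos hv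
  rw [h] at this
  simp at this

lemma sqrtD_sq (v : ℂ) : (sqrtD v)^2 = v^2 - 4 := by
  rw [sqrtD, mul_pow, sq_cpow_half, sq_cpow_half]; ring

lemma charC_im_pos {z : ℂ} (hz : 0 < z.im) {s : ℝ} (hs : 0 ≤ s) : 0 < (charC z s).im := by
  have ha : Real.exp (-s/2) ≤ Real.exp (s/2) := Real.exp_le_exp.2 (by linarith)
  have hb : 0 < Real.exp (-s/2) := Real.exp_pos _
  have hw := sqrtD_im_pos hz
  simp only [charC, Complex.div_im, Complex.add_im, Complex.mul_im, Complex.ofReal_re,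
    Complex.ofReal_im, Complex.add_re, Complex.sub_im, Complex.sub_re, Complex.add_im]
  norm_num
  nlinarith [hw, hz, ha, hb]

/-- The other branch value along the characteristic. -/
def wC (z : ℂ) (s : ℝ) : ℂ :=
  ((Real.exp (s / 2) : ℂ) * (z + sqrtD z) - (Real.exp (-s / 2) : ℂ) * (z - sqrtD z)) / 2

lemma wC_im_pos {z : ℂ} (hz : 0 < z.im) {s : ℝ} (hs : 0 ≤ s) : 0 < (wC z s).im := by
  have ha : Real.exp (-s/2) ≤ Real.exp (s/2) := Real.exp_le_exp.2 (by linarith)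
  have hb : 0 < Real.exp (-s/2) := Real.exp_pos _
  have hw := sqrtD_im_pos hz
  simp only [wC, Complex.div_im, Complex.sub_im, Complex.mul_im, Complex.ofReal_re,
    Complex.ofReal_im, Complex.add_re, Complex.add_im, Complex.sub_re]
  norm_num
  nlinarith [hw, hz, ha, hb]

lemma sqrtD_charC {z : ℂ} (hz : 0 < z.im) {s : ℝ} (hs : 0 ≤ s) :
    sqrtD (charC z s) = wC z s := by
  have hsq : (sqrtD (charC z s))^2 = (wC z s)^2 := by
    rw [sqrtD_sq]
    have hab' : Real.exp (s/2) * Real.exp (-s/2) = 1 := by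
      rw [← Real.exp_add, show s/2 + -s/2 = 0 by ring, Real.exp_zero]
    have hab : (Real.exp (s/2) : ℂ) * (Real.exp (-s/2) : ℂ) = 1 := by
      rw [← Complex.ofReal_mul, hab']; norm_num
    have hAB : (z + sqrtD z) * (z - sqrtD z) = 4 := by
      linear_combination (-1 : ℂ) * sqrtD_sq z
    simp only [charC, wC]
    linear_combination ((z + sqrtD z) * (z - sqrtD z)) * hab + hAB
  have hfac : (sqrtD (charC z s) - wC z s) * (sqrtD (charC z s) + wC z s) = 0 := by
    linear_combination hsq
  rcases mul_eq_zero.1 hfac with h | h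
  · exact sub_eq_zero.1 h
  · exfalso
    have h1 : 0 < (sqrtD (charC z s)).im := sqrtD_im_pos (charC_im_pos hz hs)
    have h2 : 0 < (wC z s).im := wC_im_pos hz hs
    have : (sqrtD (charC z s)).im = -(wC z s).im := by
      rw [eq_neg_of_add_eq_zero_left h]; simp
    linarith

lemma hasDerivAt_sqrtD {v : ℂ} (hv : 0 < v.im) :
    HasDerivAt sqrtD (v / sqrtD v) v := by
  have hm0 : v - 2 ≠ 0 := by
    intro h; apply hv.ne'; have := congrArg Complex.im h; simpa using this
  have hp0 : v + 2 ≠ 0 := by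
    intro h; apply hv.ne'; have := congrArg Complex.im h; simpa using this
  have hm2 : v - 2 ∈ Complex.slitPlane :=
    Complex.mem_slitPlane_iff.2 (Or.inr (by simpa using hv.ne'))
  have hp2 : v + 2 ∈ Complex.slitPlane :=
    Complex.mem_slitPlane_iff.2 (Or.inr (by simpa using hv.ne'))
  have h1 : HasDerivAt (fun w : ℂ => (w - 2) ^ ((1:ℂ)/2))
      (((1:ℂ)/2) * (v - 2) ^ ((1:ℂ)/2 - 1) * 1) v :=
    HasDerivAt.cpow_const ((hasDerivAt_id v).sub_const 2) hm2
  have h2 : HasDerivAt (fun w : ℂ => (w + 2) ^ ((1:ℂ)/2))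
      (((1:ℂ)/2) * (v + 2) ^ ((1:ℂ)/2 - 1) * 1) v :=
    HasDerivAt.cpow_const ((hasDerivAt_id v).add_const 2) hp2
  have h := h1.mul h2
  have key : ((1:ℂ)/2) * (v - 2) ^ ((1:ℂ)/2 - 1) * 1 * ((v + 2) ^ ((1:ℂ)/2)) +
      ((v - 2) ^ ((1:ℂ)/2)) * (((1:ℂ)/2) * (v + 2) ^ ((1:ℂ)/2 - 1) * 1) = v / sqrtD v := by
    simp only [sqrtD]
    set p := (v - 2) ^ ((1:ℂ)/2) with hp
    set q := (v + 2) ^ ((1:ℂ)/2) with hq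
    have hps : p^2 = v - 2 := sq_cpow_half _
    have hqs : q^2 = v + 2 := sq_cpow_half _
    have hpne : p ≠ 0 := by intro h0; rw [h0] at hps; exact hm0 (by simpa using hps.symm)
    have hqne : q ≠ 0 := by intro h0; rw [h0] at hqs; exact hp0 (by simpa using hqs.symm)
    have e1 : (v - 2) ^ ((1:ℂ)/2 - 1) = p / (v - 2) := by
      rw [Complex.cpow_sub _ _ hm0, Complex.cpow_one]
    have e2 : (v + 2) ^ ((1:ℂ)/2 - 1) = q / (v + 2) := by
      rw [Complex.cpow_sub _ _ hp0, Complex.cpow_one]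
    rw [e1, e2, show v - 2 = p^2 from hps.symm, show v + 2 = q^2 from hqs.symm]
    have hv2 : p^2 + q^2 = 2*v := by rw [hps, hqs]; ring
    field_simp
    linear_combination hv2
  rw [key] at h
  exact h

lemma hasDerivAt_exp_half (s : ℝ) :
    HasDerivAt (fun r : ℝ => ((Real.exp (r / 2) : ℝ) : ℂ)) ((Real.exp (s/2) / 2 : ℝ) : ℂ) s := by
  have h : HasDerivAt (fun r : ℝ => Real.exp (r / 2)) (Real.exp (s/2) / 2) s := by
    have := (Real.hasDerivAt_exp (s/2)).comp s ((hasDerivAt_id s).div_const 2)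
    refine this.congr_deriv ?_
    simp; ring
  exact h.ofReal_comp

lemma hasDerivAt_exp_neg_half (s : ℝ) :
    HasDerivAt (fun r : ℝ => ((Real.exp (-r / 2) : ℝ) : ℂ)) ((-Real.exp (-s/2) / 2 : ℝ) : ℂ) s := by
  have h : HasDerivAt (fun r : ℝ => Real.exp (-r / 2)) (-Real.exp (-s/2) / 2) s := by
    have := (Real.hasDerivAt_exp (-s/2)).comp s (((hasDerivAt_id s).neg).div_const 2)
    refine this.congr_deriv ?_
    ring
  exact h.ofReal_comp

lemma hasDerivAt_charC (z : ℂ) (s : ℝ) :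
    HasDerivAt (charC z)
      (((((Real.exp (s/2) / 2 : ℝ)) : ℂ) * (z + sqrtD z)
        + (((-Real.exp (-s/2) / 2 : ℝ)) : ℂ) * (z - sqrtD z)) / 2) s := by
  have e1 := (hasDerivAt_exp_half s).mul_const (z + sqrtD z)
  have e2 := (hasDerivAt_exp_neg_half s).mul_const (z - sqrtD z)
  exact (e1.add e2).div_const 2

lemma charC_deriv_eq {z : ℂ} (hz : 0 < z.im) {s : ℝ} (hs : 0 ≤ s) :
    ((((Real.exp (s/2) / 2 : ℝ)) : ℂ) * (z + sqrtD z)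
        + (((-Real.exp (-s/2) / 2 : ℝ)) : ℂ) * (z - sqrtD z)) / 2
      = sqrtD (charC z s) / 2 := by
  rw [sqrtD_charC hz hs, wC]
  push_cast
  ring

lemma hasDerivAt_hh {z : ℂ} (hz : 0 < z.im) {s : ℝ} (hs : 0 ≤ s) :
    HasDerivAt (fun r : ℝ => ((Real.exp (-r / 2) : ℝ) : ℂ) * sqrtD (charC z r))
      (mscDeriv (charC z s) * (((Real.exp (-s / 2) : ℝ) : ℂ) * sqrtD (charC z s))) s := by
  have hw : 0 < (charC z s).im := charC_im_pos hz hs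
  have hS : sqrtD (charC z s) ≠ 0 := sqrtD_ne_zero hw
  have hcomp : HasDerivAt (fun r : ℝ => sqrtD (charC z r))
      (charC z s / sqrtD (charC z s) * ((((Real.exp (s/2) / 2 : ℝ)) : ℂ) * (z + sqrtD z)
        + (((-Real.exp (-s/2) / 2 : ℝ)) : ℂ) * (z - sqrtD z)) / 2) s := by
    have := (hasDerivAt_sqrtD hw).comp s (hasDerivAt_charC z s)
    refine this.congr_deriv ?_
    ring
  rw [show charC z s / sqrtD (charC z s) * ((((Real.exp (s/2) / 2 : ℝ)) : ℂ) * (z + sqrtD z)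
        + (((-Real.exp (-s/2) / 2 : ℝ)) : ℂ) * (z - sqrtD z)) / 2
      = charC z s / sqrtD (charC z s) * (sqrtD (charC z s) / 2) by
    rw [← charC_deriv_eq hz hs]; ring] at hcomp
  have hmul := (hasDerivAt_exp_neg_half s).mul hcomp
  refine hmul.congr_deriv ?_
  rw [mscDeriv]
  push_cast
  field_simp
  ring

end ExpIntAux

/-- Exponential of the integral of `m_sc′` along the characteristic curve. -/
theorem exp_integral_msc_deriv (z : ℂ) (hz : 0 < z.im) (t u : ℝ) (htu : 0 ≤ t + u) :
    Complex.exp (∫ r in (-u)..t, mscDeriv (charC z (t - r)))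
      = (Real.exp (-(t + u) / 2) : ℂ) * sqrtD (charC z (t + u)) / sqrtD z := by
  classical
  open ExpIntAux in
  set T := t + u with hT
  set g : ℝ → ℂ := fun s => mscDeriv (charC z (max s 0)) with hgdef
  have hcharCont : Continuous (charC z) := by
    unfold charC
    refine Continuous.div_const (Continuous.add ?_ ?_) 2
    · exact (Complex.continuous_ofReal.comp
        (Real.continuous_exp.comp (continuous_id.div_const 2))).mul continuous_const
    · exact (Complex.continuous_ofReal.comp
        (Real.continuous_exp.comp ((continuous_id.neg).div_const 2))).mul continuous_const
  have hg : Continuous g := by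
    rw [continuous_iff_continuousAt]
    intro s
    have hw : 0 < (charC z (max s 0)).im := charC_im_pos hz (le_max_right s 0)
    have h1 : ContinuousAt mscDeriv (charC z (max s 0)) := by
      unfold mscDeriv
      exact (((continuousAt_id.div (hasDerivAt_sqrtD hw).continuousAt
        (sqrtD_ne_zero hw)).sub continuousAt_const).div_const 2)
    have hmax : Continuous fun s : ℝ => max s 0 := continuous_id.max continuous_const
    have hc2 : ContinuousAt (charC z ∘ fun s : ℝ => max s 0) s :=
      ContinuousAt.comp (x := s) (g := charC z) (f := fun s : ℝ => max s 0)
        hcharCont.continuousAt hmax.continuousAt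
    exact ContinuousAt.comp (x := s) (g := mscDeriv) (f := charC z ∘ fun s : ℝ => max s 0)
      h1 hc2
  set F : ℝ → ℂ := fun s => ∫ r in (0:ℝ)..s, g r with hFdef
  have hF : ∀ s : ℝ, HasDerivAt F (g s) s := fun s =>
    (hg.integral_hasStrictDerivAt 0 s).hasDerivAt
  set hh : ℝ → ℂ := fun s => ((Real.exp (-s / 2) : ℝ) : ℂ) * sqrtD (charC z s) with hhdef
  set K : ℝ → ℂ := fun s => Complex.exp (-F s) * hh s with hKdef
  have hK : ∀ s ∈ Icc (0:ℝ) T, HasDerivAt K 0 s := by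
    intro s hs
    have hgs : g s = mscDeriv (charC z s) := by
      simp only [hgdef, max_eq_left hs.1]
    have h1 : HasDerivAt (fun r => Complex.exp (-F r)) (Complex.exp (-F s) * (-g s)) s :=
      ((hF s).neg).cexp
    have h2 := hasDerivAt_hh hz hs.1
    have := h1.mul h2
    refine this.congr_deriv ?_
    rw [hgs]
    ring
  have hKconst := constant_of_has_deriv_right_zero
    (f := K) (a := 0) (b := T)
    (fun x hx => ((hK x hx).continuousAt).continuousWithinAt)
    (fun x hx => (hK x ⟨hx.1, hx.2.le⟩).hasDerivWithinAt)
    T (right_mem_Icc.2 htu)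
  have hchar0 : charC z 0 = z := by
    simp [charC, Real.exp_zero]
  have hK0 : K 0 = sqrtD z := by
    simp [hKdef, hFdef, hhdef, intervalIntegral.integral_same, hchar0, Real.exp_zero]
  have hKT : Complex.exp (-F T) * hh T = sqrtD z := by
    rw [← hK0]; exact hKconst
  have hint : (∫ r in (-u)..t, mscDeriv (charC z (t - r))) = F T := by
    have hsub := intervalIntegral.integral_comp_sub_left
      (a := -u) (b := t) (fun s => mscDeriv (charC z s)) t
    rw [show t - t = 0 by ring, show t - -u = T by rw [hT]; ring] at hsub
    rw [hsub, hFdef]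
    apply intervalIntegral.integral_congr
    intro x hx
    rw [uIcc_of_le htu] at hx
    simp only [hgdef, max_eq_left hx.1]
  rw [hint]
  have hSz : sqrtD z ≠ 0 := sqrtD_ne_zero hz
  rw [eq_div_iff hSz]
  have hkey : Complex.exp (F T) * sqrtD z = hh T := by
    rw [← hKT, ← mul_assoc, ← Complex.exp_add, add_neg_cancel, Complex.exp_zero, one_mul]
  rw [hkey]

end
end
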